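/- arXiv:2307.11919 — 2 statements merged into one kernel-verified Lean document; each statement's English description precedes it below -/
import Mathlib

section
/- Let U : ℝ → ℝ be concave, nondecreasing, non-constant and continuously differentiable, assume AE₊(U) < 1 and lim_{x→+∞} U(x) > 0 (equivalently U(x₀) > 0 for some x₀), and let γ be a real number with γ < 1 and AE₊(U) < (γ : EReal). Then there exist x' < 0 and x̄ > 0 such that U(x') < 0, U(x̄) > 0 and x·U'(x)/U(x) < γ for every x ≥ x̄; moreover, for any such x' and x̄, setting C := U(x̄)⁺ + U(x')⁻ + U(0)⁻, one has U(λ·x) ≤ λ^γ · (U(x) + C) for every real λ ≥ 1 and every x ∈ ℝ. -/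
open Filter Set

/-- Asymptotic elasticity at `+∞`: `limsup_{x→+∞} x·U'(x)/U(x)`, taken in `EReal`
(the real ratio uses the convention that division by `0` gives `0`). -/
noncomputable def AEplus (U : ℝ → ℝ) : EReal :=
  Filter.limsup (fun x : ℝ => ((x * deriv U x / U x : ℝ) : EReal)) Filter.atTop

lemma mono_deriv_nonneg' {U : ℝ → ℝ} {y : ℝ} (hmono : Monotone U)
    (hdU : DifferentiableAt ℝ U y) : 0 ≤ deriv U y := by
  have h2 := hasDerivAt_iff_tendsto_slope.1 hdU.hasDerivAt
  have h3 : Tendsto (slope U y) (nhdsWithin y (Ioi y)) (nhds (deriv U y)) :=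
    h2.mono_left (nhdsWithin_mono y (fun z hz => hz.ne'))
  refine ge_of_tendsto h3 ?_
  filter_upwards [self_mem_nhdsWithin] with z hz
  rw [slope_def_field]
  exact div_nonneg (sub_nonneg.2 (hmono (le_of_lt hz))) (sub_nonneg.2 (le_of_lt hz))

lemma key_growth (U : ℝ → ℝ) (hC1 : ContDiff ℝ 1 U)
    (γ xbar : ℝ) (hxbar : 0 < xbar)
    (hrat : ∀ y, xbar ≤ y → y * deriv U y < γ * U y)
    (lam : ℝ) (hlam : 1 ≤ lam) (x : ℝ) (hx : xbar ≤ x) :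
    U (lam * x) ≤ lam ^ γ * U x := by
  have hdU : Differentiable ℝ U := hC1.differentiable one_ne_zero
  have hxpos : 0 < x := hxbar.trans_le hx
  set f : ℝ → ℝ := fun t => t ^ (-γ) * U (t * x) with hf
  have hder : ∀ t : ℝ, 0 < t → HasDerivAt f
      ((-γ) * t ^ (-γ - 1) * U (t * x) + t ^ (-γ) * (deriv U (t * x) * x)) t := by
    intro t ht
    have h1 : HasDerivAt (fun s : ℝ => s ^ (-γ)) ((-γ) * t ^ (-γ - 1)) t :=
      Real.hasDerivAt_rpow_const (Or.inl ht.ne')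
    have h2 : HasDerivAt (fun s : ℝ => U (s * x)) (deriv U (t * x) * x) t :=
      ((hdU (t * x)).hasDerivAt).comp t (hasDerivAt_mul_const x)
    exact h1.mul h2
  have hanti : AntitoneOn f (Ici 1) := by
    apply antitoneOn_of_deriv_nonpos (convex_Ici 1)
    · intro t ht
      exact ((hder t (lt_of_lt_of_le one_pos ht)).differentiableAt).continuousAt.continuousWithinAt
    · intro t ht
      rw [interior_Ici] at ht
      exact ((hder t (lt_trans one_pos ht)).differentiableAt).differentiableWithinAt
    · intro t ht
      rw [interior_Ici] at ht
      have ht1 : (1 : ℝ) < t := ht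
      have htpos : 0 < t := lt_trans one_pos ht1
      rw [(hder t htpos).deriv]
      have hy : xbar ≤ t * x := le_trans hx (le_mul_of_one_le_left hxpos.le ht1.le)
      have hr := hrat _ hy
      have hts : t ^ (-γ) = t ^ (-γ - 1) * t := by
        rw [← Real.rpow_add_one htpos.ne' (-γ - 1)]
        norm_num
      have heq : (-γ) * t ^ (-γ - 1) * U (t * x) + t ^ (-γ) * (deriv U (t * x) * x)
          = t ^ (-γ - 1) * ((t * x) * deriv U (t * x) - γ * U (t * x)) := by
        rw [hts]; ring
      rw [heq]
      exact mul_nonpos_of_nonneg_of_nonpos (Real.rpow_nonneg htpos.le _) (by linarith)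
  have hle : f lam ≤ f 1 := hanti self_mem_Ici hlam hlam
  have hf1 : f 1 = U x := by simp [hf]
  have hlampos : 0 < lam := lt_of_lt_of_le one_pos hlam
  have hγpow : 0 < lam ^ γ := Real.rpow_pos_of_pos hlampos γ
  have h2 : lam ^ (-γ) * U (lam * x) ≤ U x := hf1 ▸ hle
  calc U (lam * x) = lam ^ γ * (lam ^ (-γ) * U (lam * x)) := by
        rw [← mul_assoc, ← Real.rpow_add hlampos]; simp
    _ ≤ lam ^ γ * U x := mul_le_mul_of_nonneg_left h2 hγpow.le

/-- Let `U : ℝ → ℝ` be concave, nondecreasing, non-constant and continuously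
differentiable with `AE₊(U) < 1` and `U x₀ > 0` for some `x₀`, and let `γ` satisfy `γ < 1` and
`AE₊(U) < (γ : EReal)`. Then there are `x' < 0` and `x̄ > 0` with `U x' < 0`, `U x̄ > 0` and
`x·U'(x)/U(x) < γ` for all `x ≥ x̄`; and for any such `x'`, `x̄`, with
`C := (U x̄)⁺ + (U x')⁻ + (U 0)⁻` one has `U (λ·x) ≤ λ^γ · (U x + C)` for every `λ ≥ 1`
and every `x`. -/
theorem AE_plus_growth (U : ℝ → ℝ) (hconc : ConcaveOn ℝ Set.univ U) (hmono : Monotone U)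
    (hnonconst : ∃ a b : ℝ, U a ≠ U b) (hC1 : ContDiff ℝ 1 U)
    (hAE : AEplus U < 1) (hpos : ∃ x₀ : ℝ, 0 < U x₀)
    (γ : ℝ) (hγ1 : γ < 1) (hγ2 : AEplus U < (γ : EReal)) :
    (∃ x' xbar : ℝ, x' < 0 ∧ 0 < xbar ∧ U x' < 0 ∧ 0 < U xbar ∧
      ∀ x, xbar ≤ x → x * deriv U x / U x < γ) ∧
    (∀ x' xbar : ℝ, x' < 0 → 0 < xbar → U x' < 0 → 0 < U xbar →
      (∀ x, xbar ≤ x → x * deriv U x / U x < γ) →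
      ∀ lam : ℝ, 1 ≤ lam → ∀ x : ℝ,
        U (lam * x) ≤ lam ^ γ * (U x + (max (U xbar) 0 + max (-U x') 0 + max (-U 0) 0))) := by
  constructor
  · -- Part 1: existence
    obtain ⟨x₀, hx₀⟩ := hpos
    obtain ⟨a, b, hab, hUab⟩ : ∃ a b : ℝ, a < b ∧ U a < U b := by
      obtain ⟨a, b, hne⟩ := hnonconst
      rcases lt_trichotomy a b with h | h | h
      · exact ⟨a, b, h, (hmono h.le).lt_of_ne hne⟩
      · exact absurd (by rw [h]) hne
      · exact ⟨b, a, h, (hmono h.le).lt_of_ne (Ne.symm hne)⟩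
    set s : ℝ := (U b - U a) / (b - a) with hs_def
    have hs : 0 < s := div_pos (by linarith) (by linarith)
    obtain ⟨x', hx'a, hx'0, hgap⟩ :
        ∃ w : ℝ, w < a ∧ w < 0 ∧ U a / s < a - w := by
      refine ⟨min (min a 0) (a - U a / s) - 1, ?_, ?_, ?_⟩
      · have h1 := min_le_left (min a 0) (a - U a / s)
        have h2 := min_le_left a 0
        linarith
      · have h1 := min_le_left (min a 0) (a - U a / s)
        have h2 := min_le_right a 0
        linarith
      · have h1 := min_le_right (min a 0) (a - U a / s)
        linarith
    have hUx' : U x' < 0 := by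
      have hsl := hconc.slope_anti_adjacent (mem_univ x') (mem_univ b) hx'a hab
      -- hsl : (U b - U a) / (b - a) ≤ (U a - U x') / (a - x')
      have hax' : 0 < a - x' := by linarith
      have h2 : s * (a - x') ≤ U a - U x' := (le_div_iff₀ hax').1 hsl
      have h3 : U a < (a - x') * s := (div_lt_iff₀ hs).1 hgap
      nlinarith
    -- xbar
    have hev : ∀ᶠ x in atTop,
        ((x * deriv U x / U x : ℝ) : EReal) < (γ : EReal) :=
      eventually_lt_of_limsup_lt hγ2
    rw [eventually_atTop] at hev
    obtain ⟨N, hN⟩ := hev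
    refine ⟨x', max N (max x₀ 1), hx'0, lt_of_lt_of_le one_pos
      (le_trans (le_max_right x₀ 1) (le_max_right N _)), hUx', ?_, ?_⟩
    · exact lt_of_lt_of_le hx₀ (hmono (le_trans (le_max_left x₀ 1) (le_max_right N _)))
    · intro x hx
      have := hN x (le_trans (le_max_left N _) hx)
      exact_mod_cast this
  · -- Part 2
    intro x' xbar hx'0 hxbar hUx' hUxbar hrat lam hlam x
    have hdU : Differentiable ℝ U := hC1.differentiable one_ne_zero
    have hlampos : 0 < lam := lt_of_lt_of_le one_pos hlam
    have hγ0 : 0 < γ := by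
      have hd : 0 ≤ deriv U xbar := mono_deriv_nonneg' hmono (hdU xbar)
      have h0 : 0 ≤ xbar * deriv U xbar / U xbar :=
        div_nonneg (mul_nonneg hxbar.le hd) hUxbar.le
      exact lt_of_le_of_lt h0 (hrat xbar le_rfl)
    have hγpow : 0 < lam ^ γ := Real.rpow_pos_of_pos hlampos γ
    have hγpow1 : 1 ≤ lam ^ γ := Real.one_le_rpow hlam hγ0.le
    have hγlam : lam ^ γ ≤ lam := by
      have := Real.rpow_le_rpow_of_exponent_le hlam hγ1.le
      rwa [Real.rpow_one] at this
    have hrat' : ∀ y, xbar ≤ y → y * deriv U y < γ * U y := by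
      intro y hy
      have hUy : 0 < U y := lt_of_lt_of_le hUxbar (hmono hy)
      exact (div_lt_iff₀ hUy).1 (hrat y hy)
    set m0 : ℝ := max (-U 0) 0 with hm0_def
    have hm0a : -U 0 ≤ m0 := le_max_left _ _
    have hm0b : 0 ≤ m0 := le_max_right _ _
    have hmx' : 0 ≤ max (-U x') 0 := le_max_right _ _
    have hmxb : 0 ≤ max (U xbar) 0 := le_max_right _ _
    rcases le_or_gt (U x + m0) 0 with hcase | hcase
    · -- concavity bound
      have hconcav : U (lam * x) ≤ lam * (U x + m0) := by
        have harg : (1 / lam) • (lam * x) + (1 - 1 / lam) • (0 : ℝ) = x := by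
          rw [smul_eq_mul, smul_eq_mul]; field_simp; ring
        have hb : (0 : ℝ) ≤ 1 - 1 / lam := by
          have : 1 / lam ≤ 1 := by
            rw [div_le_one hlampos]; exact hlam
          linarith
        have h := hconc.2 (mem_univ (lam * x)) (mem_univ (0 : ℝ))
          (show (0 : ℝ) ≤ 1 / lam by positivity) hb
          (show 1 / lam + (1 - 1 / lam) = 1 by ring)
        rw [harg] at h
        -- h : 1/lam • U (lam*x) + (1 - 1/lam) • U 0 ≤ U x
        rw [smul_eq_mul, smul_eq_mul] at h
        have h3 := mul_le_mul_of_nonneg_left h hlampos.le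
        have hc : lam * (1 / lam) = 1 := by field_simp
        have e1 : lam * (1 / lam * U (lam * x) + (1 - 1 / lam) * U 0)
            = lam * (1 / lam) * U (lam * x) + (lam - lam * (1 / lam)) * U 0 := by ring
        rw [e1, hc] at h3
        have h4 : U (lam * x) + (lam - 1) * U 0 ≤ lam * U x := by linarith
        have h5 : 0 ≤ (lam - 1) * (m0 + U 0) :=
          mul_nonneg (by linarith) (by linarith)
        nlinarith [h4, h5, hm0b]
      calc U (lam * x) ≤ lam * (U x + m0) := hconcav
        _ ≤ lam ^ γ * (U x + m0) := mul_le_mul_of_nonpos_right hγlam hcase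
        _ ≤ lam ^ γ * (U x + (max (U xbar) 0 + max (-U x') 0 + m0)) := by
            apply mul_le_mul_of_nonneg_left _ hγpow.le
            linarith
    · rcases le_or_gt xbar x with hxx | hxx
      · have h1 : U (lam * x) ≤ lam ^ γ * U x :=
          key_growth U hC1 γ xbar hxbar hrat' lam hlam x hxx
        refine le_trans h1 (mul_le_mul_of_nonneg_left ?_ hγpow.le)
        linarith
      · have h1 : U (lam * x) ≤ U (lam * xbar) :=
          hmono (mul_le_mul_of_nonneg_left hxx.le hlampos.le)
        have h2 : U (lam * xbar) ≤ lam ^ γ * U xbar :=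
          key_growth U hC1 γ xbar hxbar hrat' lam hlam xbar le_rfl
        have h3 : U xbar ≤ max (U xbar) 0 := le_max_left _ _
        refine le_trans h1 (le_trans h2 (mul_le_mul_of_nonneg_left ?_ hγpow.le))
        linarith
end

section
/- Let (Ω, 𝒢) be a measurable space, p* a probability measure on Ω, Y : Ω → ℝ^d a measurable map, and V : Ω × ℝ → EReal jointly measurable with V(ω, ·) nondecreasing for every ω. Let 0 < γ̲ ≤ 1 ≤ γ̄ with γ̲ ≠ γ̄ and let η ∈ (0,1) satisfy γ̲ < η·γ̄. Let C : Ω → [0,∞] be measurable with c* := ∫⁻ C dp* < ∞ and assume that for every ω with C(ω) < ∞, every λ ≥ 1 and every x ∈ ℝ: V(ω, λ·x) ≤ λ^{γ̲}·(V(ω,x) + C(ω)) and V(ω, λ·x) ≤ λ^{γ̄}·(V(ω,x) + C(ω)) in EReal. Let α* ∈ (0,1] and A ⊆ ℝ^d satisfy p*({ω : ⟨h, Y(ω)⟩ < −α*·|h|}) ≥ α* for every h ∈ A with h ≠ 0, and let n₀ ≥ 1 be an integer with p*({ω : V(ω, −n₀) ≤ −(1 + 2c*/α*)}) ≥ 1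 − α*/2. Assume l* := Σ_{θ ∈ {−1,1}^d} ∫⁻ (V(ω, 1 + ⟨θ, Y(ω)⟩))⁺ dp*(ω) < ∞. Define K₀(x) := max(1, x⁺, (x⁺ + n₀)/α*, ((x⁺ + n₀)/α*)^{1/(1−η)}). Then for every x ∈ ℝ and every h ∈ A with |h| ≥ K₀(x): I_{p*}(ω ↦ V(ω, x + ⟨h, Y(ω)⟩)) ≤ |h|^{γ̲}·(l* + c*) − |h|^{η·γ̄}·α*/2, the comparison being in EReal. -/
open MeasureTheory Set
open scoped ENNReal

/-- The `[0,∞]`-valued positive part `a⁺ = max(a,0)` of `a : EReal`. -/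
noncomputable def ePos (a : EReal) : ℝ≥0∞ := (max a 0).abs

/-- The `[0,∞]`-valued negative part `a⁻ = max(−a,0)` of `a : EReal`. -/
noncomputable def eNeg (a : EReal) : ℝ≥0∞ := (max (-a) 0).abs

/-- The `(−∞)`-integral `I_p(f) := (∫⁻ f⁺ dp) − (∫⁻ f⁻ dp)` computed in `EReal`; note that
`EReal` subtraction satisfies `⊤ - ⊤ = ⊥`, which implements the stipulation
`I_p(f) = −∞` when both integrals are infinite. -/
noncomputable def Iminus {Ω : Type*} [MeasurableSpace Ω] (p : Measure Ω)
    (f : Ω → EReal) : EReal :=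
  ((∫⁻ ω, ePos (f ω) ∂p : ℝ≥0∞) : EReal) - ((∫⁻ ω, eNeg (f ω) ∂p : ℝ≥0∞) : EReal)

/-- The sign vector of `ℝ^d` associated with `s : Fin d → Bool` (coordinates `±1`). -/
noncomputable def signVec {d : ℕ} (s : Fin d → Bool) : EuclideanSpace ℝ (Fin d) :=
  WithLp.toLp 2 (fun i => if s i then (1 : ℝ) else -1)


lemma abs_mono_nonneg {a b : EReal} (ha : 0 ≤ a) (hab : a ≤ b) : a.abs ≤ b.abs := by
  induction b with
  | bot => exact absurd (le_trans ha hab) (by simp)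
  | coe b =>
    induction a with
    | bot => simp at ha
    | coe a =>
      rw [EReal.abs_def, EReal.abs_def]
      have ha' : (0:ℝ) ≤ a := EReal.coe_nonneg.1 ha
      have hab' : a ≤ b := by exact_mod_cast hab
      rw [abs_of_nonneg ha', abs_of_nonneg (ha'.trans hab')]; exact ENNReal.ofReal_le_ofReal hab'
    | top => simp at hab
  | top => simp [EReal.abs_top]

lemma ePos_mono : Monotone ePos := fun a b hab =>
  abs_mono_nonneg (le_max_right _ _) (max_le_max hab le_rfl)

lemma eNeg_anti : Antitone eNeg := fun a b hab =>
  abs_mono_nonneg (le_max_right _ _) (max_le_max (EReal.neg_le_neg_iff.2 hab) le_rfl)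

lemma ePos_measurable : Measurable ePos := ePos_mono.measurable
lemma eNeg_measurable : Measurable eNeg := eNeg_anti.measurable

lemma ePos_coe (x : ℝ) : ePos (x : EReal) = ENNReal.ofReal x := by
  rw [ePos]
  rcases le_or_gt x 0 with h | h
  · rw [max_eq_right (by exact_mod_cast h)]
    simp [ENNReal.ofReal_eq_zero.2 h]
  · rw [max_eq_left (by exact_mod_cast h.le), EReal.abs_def, abs_of_pos h]

lemma eNeg_coe (x : ℝ) : eNeg (x : EReal) = ENNReal.ofReal (-x) := by
  rw [eNeg, show -(x:EReal) = ((-x : ℝ) : EReal) by norm_cast, ← ePos, ePos_coe]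

lemma ePos_mul_left {r : ℝ} (hr : 0 < r) (a : EReal) :
    ePos ((r : EReal) * a) = ENNReal.ofReal r * ePos a := by
  have hmax : max ((r : EReal) * a) 0 = (r : EReal) * max a 0 := by
    rcases le_total a 0 with h | h
    · rw [max_eq_right h, mul_zero,
        max_eq_right (by calc (r:EReal)*a ≤ (r:EReal)*0 :=
          mul_le_mul_of_nonneg_left h (by exact_mod_cast hr.le)
          _ = 0 := mul_zero _)]
    · rw [max_eq_left h, max_eq_left (mul_nonneg (by exact_mod_cast hr.le) h)]
  rw [ePos, hmax, EReal.abs_mul, EReal.abs_def, abs_of_pos hr, ePos]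

lemma eNeg_mul_left {r : ℝ} (hr : 0 < r) (a : EReal) :
    eNeg ((r : EReal) * a) = ENNReal.ofReal r * eNeg a := by
  rw [eNeg, neg_mul_eq_mul_neg, ← ePos, ePos_mul_left hr, eNeg, ← ePos]

lemma ePos_add_coe (a : EReal) {c : ℝ} (hc : 0 ≤ c) :
    ePos (a + (c : EReal)) ≤ ePos a + ENNReal.ofReal c := by
  induction a with
  | bot => simp [ePos, EReal.bot_add]
  | coe a =>
    rw [show (a : EReal) + (c:EReal) = ((a + c : ℝ) : EReal) by norm_cast, ePos_coe, ePos_coe]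
    exact ENNReal.ofReal_add_le
  | top => simp [ePos, EReal.top_add_coe]


lemma keyA {xp n α η H : ℝ} (hxp : 0 ≤ xp) (hn : 1 ≤ n) (hα : 0 < α) (hη0 : 0 < η)
    (hη1 : η < 1) (hH1 : 1 ≤ H) (hHR : (xp + n) / α ≤ H)
    (hHR' : ((xp + n) / α) ^ (1 / (1 - η)) ≤ H) :
    (xp + n) * H ^ η ≤ α * H := by
  have hH0 : (0:ℝ) < H := lt_of_lt_of_le one_pos hH1
  set R : ℝ := (xp + n) / α with hR
  have hR0 : 0 < R := div_pos (by linarith) hα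
  have hxn : xp + n = α * R := by rw [hR]; field_simp
  have key : R * H ^ η ≤ H := by
    rcases le_total R 1 with h | h
    · calc R * H ^ η ≤ 1 * H ^ η := by
            exact mul_le_mul_of_nonneg_right h (Real.rpow_nonneg hH0.le η)
        _ = H ^ η := one_mul _
        _ ≤ H ^ (1:ℝ) := Real.rpow_le_rpow_of_exponent_le hH1 (by linarith)
        _ = H := Real.rpow_one H
    · have h1η : (1:ℝ) - η ≠ 0 := by linarith
      have hRH : R ≤ H ^ (1 - η) := by
        have := Real.rpow_le_rpow (Real.rpow_nonneg hR0.le _) hHR' (by linarith : (0:ℝ) ≤ 1 - η)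
        rwa [← Real.rpow_mul hR0.le, one_div_mul_cancel h1η, Real.rpow_one] at this
      calc R * H ^ η ≤ H ^ (1 - η) * H ^ η :=
            mul_le_mul_of_nonneg_right hRH (Real.rpow_nonneg hH0.le η)
        _ = H ^ ((1 - η) + η) := (Real.rpow_add hH0 _ _).symm
        _ = H := by norm_num
  calc (xp + n) * H ^ η = α * (R * H ^ η) := by rw [hxn, mul_assoc]
    _ ≤ α * H := mul_le_mul_of_nonneg_left key hα.le

lemma coord_le_norm {d : ℕ} (h : EuclideanSpace ℝ (Fin d)) (i : Fin d) : |h i| ≤ ‖h‖ := by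
  rw [EuclideanSpace.norm_eq]
  have : |h i| = Real.sqrt (‖h i‖ ^ 2) := by
    rw [Real.sqrt_sq_eq_abs]; simp
  rw [this]
  exact Real.sqrt_le_sqrt (Finset.single_le_sum (f := fun j => ‖h j‖ ^ 2)
    (fun j _ => sq_nonneg _) (Finset.mem_univ i))

lemma inner_le_sign {d : ℕ} (h Yω : EuclideanSpace ℝ (Fin d)) :
    (inner ℝ h Yω : ℝ) ≤ ‖h‖ * (inner ℝ (signVec (fun i => decide (0 ≤ Yω i))) Yω : ℝ) := by
  simp only [PiLp.inner_apply, RCLike.inner_apply, starRingEnd_apply, star_trivial]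
  rw [Finset.mul_sum]
  refine Finset.sum_le_sum fun i _ => ?_
  have : signVec (fun i => decide (0 ≤ Yω i)) i * Yω i = |Yω i| := by
    rcases le_or_gt 0 (Yω i) with hy | hy
    · simp [signVec, hy, abs_of_nonneg hy]
    · simp [signVec, not_le.2 hy, abs_of_neg hy]
  rw [mul_comm (Yω i) (h i), mul_comm (Yω i), this]
  calc h i * Yω i ≤ |h i * Yω i| := le_abs_self _
    _ = |h i| * |Yω i| := abs_mul _ _
    _ ≤ ‖h‖ * |Yω i| := mul_le_mul_of_nonneg_right (coord_le_norm h i) (abs_nonneg _)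

/-- Under the two elasticity bounds with exponents `γ̲ ≤ 1 ≤ γ̄`,
`η ∈ (0,1)` with `γ̲ < η·γ̄`, the quantitative no-arbitrage bound `α*` on `A`, the
negativity bound at `−n₀`, and `l* < ∞`, every `x ∈ ℝ` and `h ∈ A` with
`|h| ≥ K₀(x) := max(1, x⁺, (x⁺+n₀)/α*, ((x⁺+n₀)/α*)^{1/(1−η)})` satisfy
`I_{p*}(ω ↦ V(ω, x + ⟨h, Y ω⟩)) ≤ |h|^{γ̲}·(l* + c*) − |h|^{η·γ̄}·α*/2`. -/
theorem psi_coercive_bound {Ω : Type*} [MeasurableSpace Ω] {d : ℕ}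
    (p : Measure Ω) [IsProbabilityMeasure p]
    (Y : Ω → EuclideanSpace ℝ (Fin d)) (hY : Measurable Y)
    (V : Ω → ℝ → EReal) (hVmeas : Measurable (Function.uncurry V))
    (hVmono : ∀ ω, Monotone (V ω))
    (γlo γhi η : ℝ) (hγlo : 0 < γlo) (hγlo1 : γlo ≤ 1) (hγhi : 1 ≤ γhi) (hγne : γlo ≠ γhi)
    (hη0 : 0 < η) (hη1 : η < 1) (hηγ : γlo < η * γhi)
    (C : Ω → ℝ≥0∞) (hCmeas : Measurable C)
    (cstar : ℝ) (hcstar0 : 0 ≤ cstar) (hcstar : (∫⁻ ω, C ω ∂p) = ENNReal.ofReal cstar)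
    (hgrow_lo : ∀ ω, C ω < ⊤ → ∀ lam : ℝ, 1 ≤ lam → ∀ x : ℝ,
      V ω (lam * x) ≤ ((lam ^ γlo : ℝ) : EReal) * (V ω x + (C ω : EReal)))
    (hgrow_hi : ∀ ω, C ω < ⊤ → ∀ lam : ℝ, 1 ≤ lam → ∀ x : ℝ,
      V ω (lam * x) ≤ ((lam ^ γhi : ℝ) : EReal) * (V ω x + (C ω : EReal)))
    (αstar : ℝ) (hα0 : 0 < αstar) (hα1 : αstar ≤ 1)
    (A : Set (EuclideanSpace ℝ (Fin d)))
    (hqNA : ∀ h ∈ A, h ≠ 0 →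
      ENNReal.ofReal αstar ≤ p {ω | (inner ℝ h (Y ω) : ℝ) < -αstar * ‖h‖})
    (n₀ : ℕ) (hn₀ : 1 ≤ n₀)
    (hneg : ENNReal.ofReal (1 - αstar / 2)
      ≤ p {ω | V ω (-(n₀ : ℝ)) ≤ ((-(1 + 2 * cstar / αstar) : ℝ) : EReal)})
    (lstar : ℝ) (hlstar0 : 0 ≤ lstar)
    (hlstar : (∑ s : Fin d → Bool,
      ∫⁻ ω, ePos (V ω (1 + (inner ℝ (signVec s) (Y ω) : ℝ))) ∂p) = ENNReal.ofReal lstar) :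
    ∀ x : ℝ, ∀ h ∈ A,
      max (max 1 (max x 0)) (max ((max x 0 + n₀) / αstar)
          (((max x 0 + n₀) / αstar) ^ (1 / (1 - η)))) ≤ ‖h‖ →
      Iminus p (fun ω => V ω (x + (inner ℝ h (Y ω) : ℝ)))
        ≤ ((‖h‖ ^ γlo * (lstar + cstar) - ‖h‖ ^ (η * γhi) * αstar / 2 : ℝ) : EReal) := by
  intro x h hA hK
  set H : ℝ := ‖h‖ with hHdef
  set xp : ℝ := max x 0 with hxpdef
  have hH1 : 1 ≤ H := le_trans (le_max_of_le_left (le_max_left _ _)) hK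
  have hH0 : (0:ℝ) < H := lt_of_lt_of_le one_pos hH1
  have hHx : xp ≤ H := le_trans (le_max_of_le_left (le_max_right _ _)) hK
  have hHR : (xp + n₀) / αstar ≤ H := le_trans (le_max_of_le_right (le_max_left _ _)) hK
  have hHR' : ((xp + n₀) / αstar) ^ (1 / (1 - η)) ≤ H :=
    le_trans (le_max_of_le_right (le_max_right _ _)) hK
  have hxp0 : 0 ≤ xp := le_max_right _ _
  have hn1 : (1:ℝ) ≤ (n₀:ℝ) := by exact_mod_cast hn₀
  have hne : h ≠ 0 := by
    intro h0
    rw [h0, norm_zero] at hHdef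
    exact absurd (hHdef ▸ hH1) (by norm_num)
  -- a.e. finiteness of C
  have hCfin : ∀ᵐ ω ∂p, C ω < ⊤ :=
    ae_lt_top hCmeas (by rw [hcstar]; exact ENNReal.ofReal_ne_top)
  -- measurability of ω ↦ V ω (g ω) style functions
  have hVg : ∀ g : Ω → ℝ, Measurable g → Measurable (fun ω => V ω (g ω)) := fun g hg =>
    hVmeas.comp (measurable_id.prodMk hg)
  have hip : Measurable (fun ω => (inner ℝ h (Y ω) : ℝ)) :=
    (Continuous.inner continuous_const continuous_id).measurable.comp hY
  have hips : ∀ s : Fin d → Bool, Measurable (fun ω => (inner ℝ (signVec s) (Y ω) : ℝ)) :=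
    fun s => (Continuous.inner continuous_const continuous_id).measurable.comp hY
  -- the integrand
  set f : Ω → EReal := fun ω => V ω (x + (inner ℝ h (Y ω) : ℝ)) with hfdef
  -- g_s
  set g : (Fin d → Bool) → Ω → ℝ≥0∞ :=
    fun s ω => ePos (V ω (1 + (inner ℝ (signVec s) (Y ω) : ℝ))) with hgdef
  have hgmeas : ∀ s, Measurable (g s) := fun s =>
    ePos_measurable.comp (hVg _ (measurable_const.add (hips s)))
  -- rpow positivity
  have hrlo : (0:ℝ) < H ^ γlo := Real.rpow_pos_of_pos hH0 _
  have hrhi : (0:ℝ) < H ^ (η * γhi) := Real.rpow_pos_of_pos hH0 _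
  have hHη1 : (1:ℝ) ≤ H ^ η := Real.one_le_rpow hH1 hη0.le
  -- ===== Positive part =====
  have hPos : (∫⁻ ω, ePos (f ω) ∂p)
      ≤ ENNReal.ofReal (H ^ γlo * (lstar + cstar)) := by
    have hptwise : ∀ᵐ ω ∂p, ePos (f ω)
        ≤ ENNReal.ofReal (H ^ γlo) * ((∑ s : Fin d → Bool, g s ω) + C ω) := by
      filter_upwards [hCfin] with ω hCω
      set s₀ : Fin d → Bool := fun i => decide (0 ≤ Y ω i) with hs₀
      have h1 : x + (inner ℝ h (Y ω) : ℝ) ≤ H * (1 + (inner ℝ (signVec s₀) (Y ω) : ℝ)) := by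
        have := inner_le_sign h (Y ω)
        have hx : x ≤ H := le_trans (le_max_left x 0) hHx
        rw [mul_add, mul_one]
        exact add_le_add hx this
      have h2 : f ω ≤ ((H ^ γlo : ℝ) : EReal) *
          (V ω (1 + (inner ℝ (signVec s₀) (Y ω) : ℝ)) + (C ω : EReal)) :=
        le_trans (hVmono ω h1) (hgrow_lo ω hCω H hH1 _)
      have c0 : (C ω : EReal) = (((C ω).toReal : ℝ) : EReal) := by
        rw [← EReal.coe_toReal (x := (C ω : EReal)) (by simp [lt_top_iff_ne_top.1 hCω])
          (by simp), EReal.toReal_coe_ennreal]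
      calc ePos (f ω) ≤ ePos (((H ^ γlo : ℝ) : EReal) *
            (V ω (1 + (inner ℝ (signVec s₀) (Y ω) : ℝ)) + (C ω : EReal))) := ePos_mono h2
        _ = ENNReal.ofReal (H ^ γlo) *
            ePos (V ω (1 + (inner ℝ (signVec s₀) (Y ω) : ℝ)) + (C ω : EReal)) :=
          ePos_mul_left hrlo _
        _ ≤ ENNReal.ofReal (H ^ γlo) * (g s₀ ω + C ω) := by
          refine mul_le_mul_right ?_ _
          rw [c0]
          refine le_trans (ePos_add_coe _ ENNReal.toReal_nonneg) ?_
          rw [ENNReal.ofReal_toReal (lt_top_iff_ne_top.1 hCω)]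
        _ ≤ ENNReal.ofReal (H ^ γlo) * ((∑ s : Fin d → Bool, g s ω) + C ω) := by
          refine mul_le_mul_right (add_le_add_left ?_ _) _
          exact Finset.single_le_sum (f := fun s => g s ω) (fun s _ => zero_le)
            (Finset.mem_univ s₀)
    calc (∫⁻ ω, ePos (f ω) ∂p)
        ≤ ∫⁻ ω, ENNReal.ofReal (H ^ γlo) * ((∑ s : Fin d → Bool, g s ω) + C ω) ∂p :=
          lintegral_mono_ae hptwise
      _ = ENNReal.ofReal (H ^ γlo) * ((∑ s : Fin d → Bool, ∫⁻ ω, g s ω ∂p) + ∫⁻ ω, C ω ∂p) := by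
          rw [lintegral_const_mul _ (f := fun ω => (∑ s : Fin d → Bool, g s ω) + C ω) (((Finset.univ.measurable_sum fun s _ => hgmeas s)).add
            hCmeas), lintegral_add_right _ hCmeas,
            lintegral_finset_sum _ (fun s _ => hgmeas s)]
      _ = ENNReal.ofReal (H ^ γlo * (lstar + cstar)) := by
          rw [hlstar, hcstar, ← ENNReal.ofReal_add hlstar0 hcstar0,
            ← ENNReal.ofReal_mul hrlo.le]
  -- ===== Negative part =====
  have hNeg : ENNReal.ofReal (H ^ (η * γhi) * αstar / 2)
      ≤ ∫⁻ ω, eNeg (f ω) ∂p := by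
    set M : ℝ := 1 + 2 * cstar / αstar with hMdef
    have hM0 : (0:ℝ) < M := by positivity
    have hMα : M * (αstar / 2) = αstar / 2 + cstar := by
      have hαne : αstar ≠ 0 := hα0.ne'
      have key : 2 * cstar / αstar * (αstar / 2) = cstar := by
        rw [← mul_div_assoc, div_mul_cancel₀ _ hαne, mul_div_cancel_left₀ _ two_ne_zero]
      rw [hMdef, add_mul, one_mul, key]
    set E1 : Set Ω := {ω | (inner ℝ h (Y ω) : ℝ) < -αstar * H} with hE1
    set E2 : Set Ω := {ω | V ω (-(n₀:ℝ)) ≤ ((-M : ℝ) : EReal)} with hE2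
    have hE2m : MeasurableSet E2 :=
      measurableSet_le (hVg _ measurable_const) measurable_const
    have hEm : MeasurableSet (E1 ∩ E2) :=
      (measurableSet_lt hip measurable_const).inter hE2m
    have hpE : ENNReal.ofReal (αstar / 2) ≤ p (E1 ∩ E2) := by
      have hu : p (E1 ∪ E2) + p (E1 ∩ E2) = p E1 + p E2 :=
        measure_union_add_inter E1 hE2m
      have h1 : ENNReal.ofReal αstar ≤ p E1 := hqNA h hA hne
      have h2 : ENNReal.ofReal (1 - αstar / 2) ≤ p E2 := hneg
      have hkey : (1:ℝ≥0∞) + ENNReal.ofReal (αstar / 2) ≤ 1 + p (E1 ∩ E2) := by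
        calc (1:ℝ≥0∞) + ENNReal.ofReal (αstar / 2)
            = ENNReal.ofReal αstar + ENNReal.ofReal (1 - αstar / 2) := by
              rw [← ENNReal.ofReal_one, ← ENNReal.ofReal_add one_pos.le (by linarith),
                ← ENNReal.ofReal_add hα0.le (by linarith)]
              ring_nf
          _ ≤ p E1 + p E2 := add_le_add h1 h2
          _ = p (E1 ∪ E2) + p (E1 ∩ E2) := hu.symm
          _ ≤ 1 + p (E1 ∩ E2) := add_le_add_left prob_le_one _
      exact (ENNReal.add_le_add_iff_left ENNReal.one_ne_top).1 hkey
    have hptwise : ∀ᵐ ω ∂p, (E1 ∩ E2).indicator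
        (fun ω => ENNReal.ofReal (H ^ (η * γhi)) * (ENNReal.ofReal M - C ω)) ω
        ≤ eNeg (f ω) := by
      filter_upwards [hCfin] with ω hCω
      by_cases hω : ω ∈ E1 ∩ E2
      · rw [indicator_of_mem hω]
        obtain ⟨hω1, hω2⟩ := hω
        have hαH := keyA hxp0 hn1 hα0 hη0 hη1 hH1 hHR hHR'
        have hxh : x + (inner ℝ h (Y ω) : ℝ) ≤ H ^ η * (-(n₀:ℝ)) := by
          have hip1 : (inner ℝ h (Y ω) : ℝ) < -αstar * H := hω1
          have hxx : x ≤ xp := le_max_left _ _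
          nlinarith [mul_nonneg hxp0 (sub_nonneg.2 hHη1)]
        have hc : ((H ^ η) ^ γhi : ℝ) = H ^ (η * γhi) := (Real.rpow_mul hH0.le _ _).symm
        have h2 : f ω ≤ ((H ^ (η * γhi) : ℝ) : EReal) * (((-M : ℝ) : EReal) + (C ω : EReal)) := by
          refine le_trans (le_trans (hVmono ω hxh) (hgrow_hi ω hCω (H ^ η) hHη1 (-(n₀:ℝ)))) ?_
          rw [hc]
          exact mul_le_mul_of_nonneg_left (add_le_add hω2 le_rfl)
            (by exact_mod_cast hrhi.le)
        have c0 : (C ω : EReal) = (((C ω).toReal : ℝ) : EReal) := by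
          rw [← EReal.coe_toReal (x := (C ω : EReal)) (by simp [lt_top_iff_ne_top.1 hCω])
            (by simp), EReal.toReal_coe_ennreal]
        calc ENNReal.ofReal (H ^ (η * γhi)) * (ENNReal.ofReal M - C ω)
            = ENNReal.ofReal (H ^ (η * γhi)) * ENNReal.ofReal (M - (C ω).toReal) := by
              rw [ENNReal.ofReal_sub _ ENNReal.toReal_nonneg,
                ENNReal.ofReal_toReal (lt_top_iff_ne_top.1 hCω)]
          _ = ENNReal.ofReal (H ^ (η * γhi)) * eNeg (((-M : ℝ) : EReal) + (C ω : EReal)) := by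
              rw [c0, ← EReal.coe_add, eNeg_coe]
              ring_nf
          _ = eNeg (((H ^ (η * γhi) : ℝ) : EReal) * (((-M : ℝ) : EReal) + (C ω : EReal))) :=
              (eNeg_mul_left hrhi _).symm
          _ ≤ eNeg (f ω) := eNeg_anti h2
      · rw [indicator_of_notMem hω]; exact zero_le
    have hsub : ENNReal.ofReal (αstar / 2)
        ≤ ∫⁻ ω in E1 ∩ E2, (ENNReal.ofReal M - C ω) ∂p := by
      have h1 : (∫⁻ ω in E1 ∩ E2, ENNReal.ofReal M ∂p)
          ≤ (∫⁻ ω in E1 ∩ E2, (ENNReal.ofReal M - C ω) ∂p) + ∫⁻ ω in E1 ∩ E2, C ω ∂p := by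
        rw [← lintegral_add_right _ hCmeas]
        exact lintegral_mono fun ω => le_tsub_add
      have h2 : (∫⁻ ω in E1 ∩ E2, C ω ∂p) ≤ ENNReal.ofReal cstar := by
        rw [← hcstar]
        exact setLIntegral_le_lintegral _ _
      have h3 : ENNReal.ofReal (αstar / 2 + cstar) ≤ ∫⁻ ω in E1 ∩ E2, ENNReal.ofReal M ∂p := by
        rw [setLIntegral_const]
        calc ENNReal.ofReal (αstar / 2 + cstar) = ENNReal.ofReal M * ENNReal.ofReal (αstar / 2) := by
              rw [← ENNReal.ofReal_mul hM0.le, hMα]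
          _ ≤ ENNReal.ofReal M * p (E1 ∩ E2) := mul_le_mul_right hpE _
      have h4 : ENNReal.ofReal (αstar / 2)
          = ENNReal.ofReal (αstar / 2 + cstar) - ENNReal.ofReal cstar := by
        rw [← ENNReal.ofReal_sub _ hcstar0]
        ring_nf
      rw [h4]
      refine tsub_le_iff_right.2 (h3.trans (h1.trans ?_))
      exact add_le_add_right h2 _
    calc ENNReal.ofReal (H ^ (η * γhi) * αstar / 2)
        = ENNReal.ofReal (H ^ (η * γhi)) * ENNReal.ofReal (αstar / 2) := by
          rw [← ENNReal.ofReal_mul hrhi.le, mul_div_assoc]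
      _ ≤ ENNReal.ofReal (H ^ (η * γhi)) * ∫⁻ ω in E1 ∩ E2, (ENNReal.ofReal M - C ω) ∂p :=
          mul_le_mul_right hsub _
      _ = ∫⁻ ω in E1 ∩ E2, ENNReal.ofReal (H ^ (η * γhi)) * (ENNReal.ofReal M - C ω) ∂p :=
          (lintegral_const_mul _ (measurable_const.sub hCmeas)).symm
      _ = ∫⁻ ω, (E1 ∩ E2).indicator
            (fun ω => ENNReal.ofReal (H ^ (η * γhi)) * (ENNReal.ofReal M - C ω)) ω ∂p :=
          (lintegral_indicator hEm _).symm
      _ ≤ ∫⁻ ω, eNeg (f ω) ∂p := lintegral_mono_ae hptwise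
  -- ===== Combine =====
  have ha1 : 0 ≤ H ^ γlo * (lstar + cstar) := by positivity
  have ha2 : 0 ≤ H ^ (η * γhi) * αstar / 2 := by positivity
  have hPc : ((∫⁻ ω, ePos (f ω) ∂p : ℝ≥0∞) : EReal)
      ≤ ((H ^ γlo * (lstar + cstar) : ℝ) : EReal) := by
    refine le_trans (EReal.coe_ennreal_le_coe_ennreal_iff.2 hPos) ?_
    rw [EReal.coe_ennreal_ofReal]
    exact EReal.coe_le_coe_iff.2 (max_le le_rfl ha1)
  have hNc : ((H ^ (η * γhi) * αstar / 2 : ℝ) : EReal)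
      ≤ ((∫⁻ ω, eNeg (f ω) ∂p : ℝ≥0∞) : EReal) := by
    refine le_trans ?_ (EReal.coe_ennreal_le_coe_ennreal_iff.2 hNeg)
    rw [EReal.coe_ennreal_ofReal]
    exact EReal.coe_le_coe_iff.2 (le_max_left _ _)
  rw [Iminus, show ((‖h‖ ^ γlo * (lstar + cstar) - ‖h‖ ^ (η * γhi) * αstar / 2 : ℝ) : EReal)
      = ((H ^ γlo * (lstar + cstar) : ℝ) : EReal) - ((H ^ (η * γhi) * αstar / 2 : ℝ) : EReal) by
        rw [← EReal.coe_sub]]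
  exact EReal.sub_le_sub hPc hNc
end
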